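/- Let R be a commutative unital ring generated as a ring by 1 together with elements a_1,...,a_n. Suppose k is a nonzero integer and for each i, k_i < l_i are natural numbers. Then the ideal I generated by k·1 and the elements a_i^{l_i} − a_i^{k_i} (i = 1,...,n) has finite additive index in R. -/
import Mathlib


/-- If a commutative unital ring R is generated as a ring by 1 and a₁,…,aₙ,
k is a nonzero integer, and kᵢ < lᵢ, then the ideal generated by k·1 and the
elements aᵢ^{lᵢ} − aᵢ^{kᵢ} has finite additive index in R. -/
theorem stmt_13 {R : Type*} [CommRing R] (n : ℕ) (a : Fin n → R)
    (hgen : Subring.closure (insert 1 (Set.range a)) = ⊤)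
    (k : ℤ) (hk : k ≠ 0) (ki li : Fin n → ℕ) (hkl : ∀ i, ki i < li i) :
    Finite (R ⧸ Ideal.span
      ({(k : R)} ∪ Set.range (fun i => a i ^ (li i) - a i ^ (ki i)))) := by
  set I := Ideal.span ({(k : R)} ∪ Set.range (fun i => a i ^ (li i) - a i ^ (ki i))) with hI
  set S := R ⧸ I with hS
  let π : R →+* S := Ideal.Quotient.mk I
  have hπ : Function.Surjective π := Ideal.Quotient.mk_surjective
  have hk0 : ((k : ℤ) : S) = 0 := by
    have : ((k : R) : S) = 0 :=
      Ideal.Quotient.eq_zero_iff_mem.mpr (Ideal.subset_span (Or.inl rfl))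
    rw [← this]; rfl
  have hkS : ((k.natAbs : ℕ) : S) = 0 := by
    rw [← Int.cast_natCast]
    rcases Int.natAbs_eq k with h | h
    · rw [← h]; exact hk0
    · rw [show ((k.natAbs : ℤ)) = -k by omega]
      push_cast; rw [hk0]; ring
  by_cases h1 : k.natAbs = 1
  · have : (1 : S) = 0 := by rw [← Nat.cast_one, ← h1]; exact hkS
    haveI : Subsingleton S := subsingleton_of_zero_eq_one this.symm
    exact Finite.of_subsingleton
  have hdvd : ringChar S ∣ k.natAbs := ringChar.dvd hkS
  letI : Algebra (ZMod k.natAbs) S := (ZMod.castHom hdvd S).toAlgebra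
  haveI : NeZero k.natAbs := ⟨Int.natAbs_ne_zero.mpr hk⟩
  haveI : Fact (1 < k.natAbs) := ⟨by omega⟩
  -- the images of the aᵢ generate S over ZMod
  have hcl : Subring.closure (insert 1 (Set.range (π ∘ a))) = ⊤ := by
    have himg : (insert 1 (Set.range (π ∘ a)) : Set S) = π '' (insert 1 (Set.range a)) := by
      rw [Set.image_insert_eq, Set.range_comp]; norm_num
    rw [himg, ← RingHom.map_closure, hgen]
    rw [eq_top_iff]
    intro x _
    obtain ⟨y, rfl⟩ := hπ x
    exact ⟨y, trivial, rfl⟩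
  have hadj : Algebra.adjoin (ZMod k.natAbs) (Set.range (π ∘ a)) = ⊤ := by
    rw [eq_top_iff]
    intro x _
    have hx : x ∈ Subring.closure (insert 1 (Set.range (π ∘ a))) := by
      rw [hcl]; trivial
    have hsub : insert 1 (Set.range (π ∘ a)) ⊆
        ((Algebra.adjoin (ZMod k.natAbs) (Set.range (π ∘ a))).toSubring : Set S) := by
      intro y hy
      rcases hy with rfl | hy
      · exact Subring.one_mem _
      · exact Algebra.subset_adjoin hy
    have := Subring.closure_le.mpr hsub hx
    rwa [Subalgebra.mem_toSubring] at this
  -- each generator is integral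
  have hint : ∀ x ∈ Set.range (π ∘ a), IsIntegral (ZMod k.natAbs) x := by
    rintro x ⟨i, rfl⟩
    refine ⟨Polynomial.X ^ (li i) - Polynomial.X ^ (ki i), ?_, ?_⟩
    · apply Polynomial.Monic.sub_of_left (Polynomial.monic_X_pow _)
      rw [Polynomial.degree_X_pow, Polynomial.degree_X_pow]
      exact_mod_cast hkl i
    · have hmem : π (a i ^ (li i) - a i ^ (ki i)) = 0 :=
        Ideal.Quotient.eq_zero_iff_mem.mpr (Ideal.subset_span (Or.inr ⟨i, rfl⟩))
      simp only [Polynomial.eval₂_sub, Polynomial.eval₂_X_pow, Function.comp_apply]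
      rw [← map_pow, ← map_pow, ← map_sub]
      exact hmem
  have hfg : (Subalgebra.toSubmodule
      (Algebra.adjoin (ZMod k.natAbs) (Set.range (π ∘ a)))).FG :=
    fg_adjoin_of_finite (Set.finite_range _) hint
  haveI : Module.Finite (ZMod k.natAbs) S := by
    rw [hadj, Algebra.top_toSubmodule] at hfg
    exact ⟨hfg⟩
  exact Module.finite_of_finite (ZMod k.natAbs)
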